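/- arXiv:1304.7041 — 4 statements merged into one kernel-verified Lean document; each statement's English description precedes it below -/
import Mathlib

section
/- Fix $n \ge 2$ and $r_s > 0$, and let $b(r) = r(r^{n-1} + r_s^{n-1})$ on $(0, r_s)$. Then $\beta_0(r) := \int_r^{r_s} \frac{ds}{b(s)} = \frac{-1}{(n-1)r_s^{n-1}} \ln\left(\frac{2 r^{n-1}}{r^{n-1} + r_s^{n-1}}\right)$, and with $a(r) = \frac{r^{2n-1}}{r^{n-1} + r_s^{n-1}}$ one has $\int_0^{r_s} \beta_0(r)^2 a(r)\,dr < \infty$, while $\int_0^{r_s} \frac{dr}{b(r)} = +\infty$. -/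
open MeasureTheory Set Filter

private lemma log_le_two_sqrt {x : ℝ} (hx : 0 < x) : Real.log x ≤ 2 * Real.sqrt x := by
  have h1 : Real.log (Real.sqrt x) ≤ Real.sqrt x - 1 :=
    Real.log_le_sub_one_of_pos (Real.sqrt_pos.mpr hx)
  have h2 : Real.log (Real.sqrt x) = Real.log x / 2 := Real.log_sqrt hx.le
  nlinarith [Real.sqrt_nonneg x]

set_option maxHeartbeats 1600000 in
/-- Anti-Schwarzschild coefficients: with
`b(r) = r (r^{n-1} + r_s^{n-1})` and `a(r) = r^{2n-1}/(r^{n-1} + r_s^{n-1})` on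
`(0, r_s)`, one has the explicit formula for `β₀(r) = ∫_r^{r_s} ds/b(s)`, the
finiteness `∫_0^{r_s} β₀² a < ∞`, and the divergence `∫_0^{r_s} dr/b(r) = ∞`. -/
theorem stmt12
    (n : ℕ) (hn : 2 ≤ n) (rs : ℝ) (hrs : 0 < rs)
    (a b : ℝ → ℝ)
    (ha : ∀ r ∈ Set.Ioo (0 : ℝ) rs, a r = r ^ (2 * n - 1) / (r ^ (n - 1) + rs ^ (n - 1)))
    (hb : ∀ r ∈ Set.Ioo (0 : ℝ) rs, b r = r * (r ^ (n - 1) + rs ^ (n - 1))) :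
    (∀ r ∈ Set.Ioo (0 : ℝ) rs,
      (∫ s in r..rs, 1 / b s) =
        (-1) / ((n - 1) * rs ^ (n - 1)) *
          Real.log (2 * r ^ (n - 1) / (r ^ (n - 1) + rs ^ (n - 1)))) ∧
    IntegrableOn (fun r => (∫ s in r..rs, 1 / b s) ^ 2 * a r) (Set.Ioo (0 : ℝ) rs) ∧
    ¬ IntegrableOn (fun r => 1 / b r) (Set.Ioo (0 : ℝ) rs) := by
  obtain ⟨k, rfl⟩ : ∃ k, n = k + 2 := ⟨n - 2, by omega⟩
  clear hn
  have e1 : k + 2 - 1 = k + 1 := rfl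
  have e2 : 2 * (k + 2) - 1 = 2 * k + 3 := by omega
  simp only [e1, e2] at ha hb ⊢
  have ecast : ((k + 2 : ℕ) : ℝ) - 1 = (k : ℝ) + 1 := by push_cast; ring
  rw [ecast]
  have hrsm : (0 : ℝ) < rs ^ (k + 1) := pow_pos hrs _
  have hP : ∀ x : ℝ, 0 ≤ x → (0 : ℝ) < x ^ (k + 1) + rs ^ (k + 1) := by
    intro x hx; positivity
  set c : ℝ := ((k : ℝ) + 1) * rs ^ (k + 1) with hc
  have hc0 : 0 < c := by positivity
  set G : ℝ → ℝ :=
    fun s => (((k : ℝ) + 1) * Real.log s - Real.log (s ^ (k + 1) + rs ^ (k + 1))) / c with hG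
  -- derivative of G
  have hderiv : ∀ x : ℝ, 0 < x →
      HasDerivAt G (1 / (x * (x ^ (k + 1) + rs ^ (k + 1)))) x := by
    intro x hx
    have hA : (0 : ℝ) < x ^ (k + 1) + rs ^ (k + 1) := hP x hx.le
    have h1 : HasDerivAt (fun s : ℝ => Real.log s) x⁻¹ x := Real.hasDerivAt_log hx.ne'
    have h2 : HasDerivAt (fun s : ℝ => s ^ (k + 1) + rs ^ (k + 1))
        (((k : ℝ) + 1) * x ^ k) x := by
      have := (hasDerivAt_pow (k + 1) x).add_const (rs ^ (k + 1))
      simpa using this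
    have h3 : HasDerivAt (fun s : ℝ => Real.log (s ^ (k + 1) + rs ^ (k + 1)))
        (((k : ℝ) + 1) * x ^ k / (x ^ (k + 1) + rs ^ (k + 1))) x := h2.log hA.ne'
    have h4 := ((h1.const_mul ((k : ℝ) + 1)).sub h3).div_const c
    refine h4.congr_deriv ?_
    rw [hc]
    field_simp
    ring
  -- continuity of the explicit integrand
  have hcont : ContinuousOn (fun s : ℝ => 1 / (s * (s ^ (k + 1) + rs ^ (k + 1))))
      {x : ℝ | (0 : ℝ) < x} := by
    apply ContinuousOn.div continuousOn_const
    · fun_prop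
    · intro x hx
      have hx0 : (0 : ℝ) < x := hx
      positivity
  -- replace b by the explicit formula inside the integral
  have hint : ∀ r ∈ Set.Ioo (0 : ℝ) rs,
      (∫ s in r..rs, 1 / b s) = ∫ s in r..rs, 1 / (s * (s ^ (k + 1) + rs ^ (k + 1))) := by
    intro r hr
    apply intervalIntegral.integral_congr_ae
    have hns : (volume : Measure ℝ) {rs} = 0 := Real.volume_singleton
    filter_upwards [compl_mem_ae_iff.mpr hns] with x hx hxI
    rw [Set.uIoc_of_le hr.2.le] at hxI
    have hxne : x ≠ rs := hx
    have hx' : x ∈ Set.Ioo (0 : ℝ) rs :=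
      ⟨lt_trans hr.1 hxI.1, lt_of_le_of_ne hxI.2 hxne⟩
    rw [hb x hx']
  -- FTC
  have key : ∀ r ∈ Set.Ioo (0 : ℝ) rs, (∫ s in r..rs, 1 / b s) = G rs - G r := by
    intro r hr
    rw [hint r hr]
    apply intervalIntegral.integral_eq_sub_of_hasDerivAt
    · intro x hx
      rw [Set.uIcc_of_le hr.2.le] at hx
      exact hderiv x (lt_of_lt_of_le hr.1 hx.1)
    · apply ContinuousOn.intervalIntegrable
      apply hcont.mono
      rw [Set.uIcc_of_le hr.2.le]
      intro x hx
      exact lt_of_lt_of_le hr.1 hx.1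
  -- log algebra: G rs - G r equals the stated formula
  have formula : ∀ r ∈ Set.Ioo (0 : ℝ) rs, G rs - G r =
      (-1) / c * Real.log (2 * r ^ (k + 1) / (r ^ (k + 1) + rs ^ (k + 1))) := by
    intro r hr
    have hr0 : 0 < r := hr.1
    have hrm : (0 : ℝ) < r ^ (k + 1) := pow_pos hr0 _
    have hA : (0 : ℝ) < r ^ (k + 1) + rs ^ (k + 1) := hP r hr0.le
    rw [hG]
    simp only
    have hrs2 : rs ^ (k + 1) + rs ^ (k + 1) = 2 * rs ^ (k + 1) := by ring
    rw [hrs2, Real.log_div (by positivity) hA.ne', Real.log_mul two_ne_zero hrm.ne',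
      Real.log_mul two_ne_zero hrsm.ne', Real.log_pow, Real.log_pow]
    push_cast
    field_simp
    ring
  refine ⟨?_, ?_, ?_⟩
  · intro r hr
    rw [key r hr, formula r hr]
  · -- Integrability of β₀² a
    set g : ℝ → ℝ := fun r =>
      (G rs - G r) ^ 2 * (r ^ (2 * k + 3) / (r ^ (k + 1) + rs ^ (k + 1))) with hg
    have hGcont : ContinuousOn G {x : ℝ | (0 : ℝ) < x} := by
      rw [hG]
      apply ContinuousOn.div _ continuousOn_const (fun x _ => hc0.ne')
      apply ContinuousOn.sub
      · exact continuousOn_const.mul (Real.continuousOn_log.mono (fun x hx => ne_of_gt hx))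
      · apply ContinuousOn.comp Real.continuousOn_log (by fun_prop)
        intro x hx
        exact ne_of_gt (hP x (le_of_lt hx))
    have hgcont : ContinuousOn g (Set.Ioo (0 : ℝ) rs) := by
      apply ContinuousOn.mul
      · exact (continuousOn_const.sub (hGcont.mono fun x hx => hx.1)).pow 2
      · apply ContinuousOn.div (by fun_prop) (by fun_prop)
        intro x hx
        exact ne_of_gt (hP x hx.1.le)
    have hbound : ∀ r ∈ Set.Ioo (0 : ℝ) rs, ‖g r‖ ≤ 4 * rs / rs ^ (k + 1) := by
      intro r hr
      have hr0 : 0 < r := hr.1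
      have hrrs : r < rs := hr.2
      have hA : (0 : ℝ) < r ^ (k + 1) + rs ^ (k + 1) := hP r hr0.le
      have hpow : r ^ (k + 1) ≤ rs ^ (k + 1) := pow_le_pow_left₀ hr0.le hrrs.le _
      set L := Real.log (2 * r ^ (k + 1) / (r ^ (k + 1) + rs ^ (k + 1))) with hLdef
      set D := Real.log rs - Real.log r with hDdef
      have hβ : G rs - G r = -1 / c * L := formula r hr
      have hL1 : L ≤ 0 := by
        apply Real.log_nonpos (by positivity)
        rw [div_le_one hA]
        nlinarith
      have hL2 : ((k : ℝ) + 1) * (Real.log r - Real.log rs) ≤ L := by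
        have harg : (r / rs) ^ (k + 1) ≤ 2 * r ^ (k + 1) / (r ^ (k + 1) + rs ^ (k + 1)) := by
          rw [div_pow, div_le_div_iff₀ (by positivity) hA]
          nlinarith [pow_pos hr0 (k + 1)]
        have h5 := Real.log_le_log (by positivity) harg
        rw [Real.log_pow, Real.log_div hr0.ne' hrs.ne'] at h5
        rw [hLdef]
        push_cast at h5 ⊢
        linarith
      have hD0 : 0 ≤ D := by
        rw [hDdef]
        have := Real.log_le_log hr0 hrrs.le
        linarith
      have habs : |(-1) / c * L| ≤ D / rs ^ (k + 1) := by
        have e3 : |(-1) / c * L| = (-L) / c := by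
          rw [abs_mul, abs_div, abs_neg, abs_one, abs_of_pos hc0, abs_of_nonpos hL1]
          ring
        rw [e3]
        have e4 : D / rs ^ (k + 1) = (((k : ℝ) + 1) * D) / c := by
          rw [hc]
          have hk1 : (0 : ℝ) < (k : ℝ) + 1 := by positivity
          field_simp
        rw [e4]
        gcongr
        have e6 : ((k : ℝ) + 1) * (Real.log r - Real.log rs) = -(((k : ℝ) + 1) * D) := by
          rw [hDdef]; ring
        linarith [hL2, e6]
      have hβ2 : (G rs - G r) ^ 2 ≤ (D / rs ^ (k + 1)) ^ 2 := by
        have h6 := pow_le_pow_left₀ (abs_nonneg ((-1) / c * L)) habs 2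
        rw [sq_abs] at h6
        rw [hβ]
        exact h6
      have hDr : D ^ 2 * r ≤ 4 * rs := by
        have h1 : D = Real.log (rs / r) := by rw [Real.log_div hrs.ne' hr0.ne']
        have h2 : D ≤ 2 * Real.sqrt (rs / r) := h1 ▸ log_le_two_sqrt (by positivity)
        have h3 : D ^ 2 ≤ (2 * Real.sqrt (rs / r)) ^ 2 := pow_le_pow_left₀ hD0 h2 2
        have h4 : (2 * Real.sqrt (rs / r)) ^ 2 = 4 * (rs / r) := by
          rw [mul_pow, Real.sq_sqrt (by positivity)]
          norm_num
        have h5 : D ^ 2 ≤ 4 * (rs / r) := h4 ▸ h3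
        have h6 := mul_le_mul_of_nonneg_right h5 hr0.le
        calc D ^ 2 * r ≤ 4 * (rs / r) * r := h6
          _ = 4 * rs := by field_simp
      have hnorm : ‖g r‖ = (G rs - G r) ^ 2 * (r ^ (2 * k + 3) / (r ^ (k + 1) + rs ^ (k + 1))) := by
        rw [hg]
        simp only
        rw [Real.norm_eq_abs, abs_of_nonneg (by positivity)]
      rw [hnorm]
      have hDrs2 : (0 : ℝ) ≤ (D / rs ^ (k + 1)) ^ 2 := by positivity
      calc (G rs - G r) ^ 2 * (r ^ (2 * k + 3) / (r ^ (k + 1) + rs ^ (k + 1)))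
          ≤ (D / rs ^ (k + 1)) ^ 2 * (r ^ (2 * k + 3) / (r ^ (k + 1) + rs ^ (k + 1))) := by
            apply mul_le_mul_of_nonneg_right hβ2 (by positivity)
        _ ≤ (D / rs ^ (k + 1)) ^ 2 * (r * (rs ^ (k + 1)) ^ 2 / rs ^ (k + 1)) := by
            apply mul_le_mul_of_nonneg_left ?_ hDrs2
            have hsplit : r ^ (2 * k + 3) = r * (r ^ (k + 1)) ^ 2 := by ring
            rw [hsplit, div_le_div_iff₀ hA hrsm]
            nlinarith [pow_pos hr0 (k + 1), mul_nonneg (mul_nonneg (mul_nonneg hr0.le hrsm.le)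
              (pow_pos hr0 (k + 1)).le) (sub_nonneg.2 hpow),
              mul_nonneg hr0.le (mul_nonneg hrsm.le (mul_nonneg hrsm.le hrsm.le))]
        _ = D ^ 2 * r / rs ^ (k + 1) := by
            field_simp
        _ ≤ 4 * rs / rs ^ (k + 1) := by
            gcongr
    have hgint : IntegrableOn g (Set.Ioo (0 : ℝ) rs) := by
      refine ⟨hgcont.aestronglyMeasurable measurableSet_Ioo, ?_⟩
      apply HasFiniteIntegral.restrict_of_bounded (C := 4 * rs / rs ^ (k + 1))
        measure_Ioo_lt_top
      rw [ae_restrict_iff' measurableSet_Ioo]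
      filter_upwards with r hr using hbound r hr
    apply hgint.congr_fun _ measurableSet_Ioo
    intro r hr
    rw [hg]
    simp only
    rw [key r hr, ha r hr]
  · -- divergence of ∫ 1/b
    intro hcontra
    have h1 : IntegrableOn (fun r : ℝ => r ^ (-1 : ℝ)) (Set.Ioo (0 : ℝ) rs) := by
      apply Integrable.mono' (hcontra.const_mul (2 * rs ^ (k + 1)))
      · apply ContinuousOn.aestronglyMeasurable _ measurableSet_Ioo
        intro x hx
        exact (Real.continuousAt_rpow_const x _ (Or.inl hx.1.ne')).continuousWithinAt
      · rw [ae_restrict_iff' measurableSet_Ioo]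
        filter_upwards with r hr
        have hr0 : 0 < r := hr.1
        have hbr : b r = r * (r ^ (k + 1) + rs ^ (k + 1)) := hb r hr
        show ‖r ^ (-1 : ℝ)‖ ≤ 2 * rs ^ (k + 1) * (1 / b r)
        rw [hbr, Real.rpow_neg_one, Real.norm_eq_abs, abs_of_nonneg (inv_nonneg.mpr hr0.le)]
        have hApow : r ^ (k + 1) + rs ^ (k + 1) ≤ 2 * rs ^ (k + 1) := by
          nlinarith [pow_le_pow_left₀ hr0.le hr.2.le (k + 1)]
        have e5 : r⁻¹ = 2 * rs ^ (k + 1) * (1 / (r * (2 * rs ^ (k + 1)))) := by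
          field_simp
        rw [e5]
        apply mul_le_mul_of_nonneg_left _ (by positivity)
        apply one_div_le_one_div_of_le (by positivity)
        nlinarith [pow_pos hr0 (k + 1)]
    rw [intervalIntegral.integrableOn_Ioo_rpow_iff hrs] at h1
    norm_num at h1
end

section
/- Fix $n \ge 2$ and $r_* > 0$, and on $(0, r_*)$ set $a(r) = \frac{r^{3n-2}}{(r^{n-1} - r_*^{n-1})^2}$, $b(r) = \frac{(r^{n-1} - r_*^{n-1})^2}{r^{n-2}}$, $d(r) = m^2 r^n$ with $m \ge 0$. Then $\int_0^{r_*/2} \left(\frac{1}{b(z)} + d(z) + a(z)\right) dz < +\infty$, while $\int_{r_*/2}^{r_*} a(r)\,dr = +\infty$. -/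
open MeasureTheory Set Filter

/-- Extreme Reissner–Nordström interior: with
`a(r) = r^{3n-2}/(r^{n-1} - r_*^{n-1})²`, `b(r) = (r^{n-1} - r_*^{n-1})²/r^{n-2}`,
`d(r) = m² rⁿ` on `(0, r_*)`, one has `∫_0^{r_*/2} (1/b + d + a) < ∞` while
`∫_{r_*/2}^{r_*} a = ∞`. -/
theorem stmt14
    (n : ℕ) (hn : 2 ≤ n) (rstar : ℝ) (hrstar : 0 < rstar) (m : ℝ) (hm : 0 ≤ m)
    (a b d : ℝ → ℝ)
    (ha : ∀ r ∈ Set.Ioo (0 : ℝ) rstar,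
      a r = r ^ (3 * n - 2) / (r ^ (n - 1) - rstar ^ (n - 1)) ^ 2)
    (hb : ∀ r ∈ Set.Ioo (0 : ℝ) rstar,
      b r = (r ^ (n - 1) - rstar ^ (n - 1)) ^ 2 / r ^ (n - 2))
    (hd : ∀ r ∈ Set.Ioo (0 : ℝ) rstar, d r = m ^ 2 * r ^ n) :
    IntegrableOn (fun z => 1 / b z + d z + a z) (Set.Ioo (0 : ℝ) (rstar / 2)) ∧
    ¬ IntegrableOn a (Set.Ioo (rstar / 2) rstar) := by
  have hn1 : 1 ≤ n - 1 := by omega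
  have hR2 : (0 : ℝ) < rstar / 2 := by linarith
  -- denominator is nonzero on [0, rstar/2]
  have hden : ∀ z ∈ Set.Icc (0 : ℝ) (rstar / 2),
      (z ^ (n - 1) - rstar ^ (n - 1)) ^ 2 ≠ 0 := by
    intro z hz
    have h1 : z ^ (n - 1) ≤ (rstar / 2) ^ (n - 1) :=
      pow_le_pow_left₀ hz.1 hz.2 _
    have h2 : (rstar / 2) ^ (n - 1) < rstar ^ (n - 1) :=
      pow_lt_pow_left₀ (by linarith) (by linarith) (by omega)
    have : z ^ (n - 1) - rstar ^ (n - 1) ≠ 0 := by nlinarith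
    positivity
  constructor
  · -- Part 1: integrability near 0
    set F : ℝ → ℝ := fun z =>
      z ^ (n - 2) / (z ^ (n - 1) - rstar ^ (n - 1)) ^ 2 + m ^ 2 * z ^ n +
        z ^ (3 * n - 2) / (z ^ (n - 1) - rstar ^ (n - 1)) ^ 2 with hF
    have hcont : ContinuousOn F (Set.Icc (0 : ℝ) (rstar / 2)) := by
      apply ContinuousOn.add
      apply ContinuousOn.add
      · exact ContinuousOn.div (continuousOn_pow _)
          (((continuousOn_pow _).sub continuousOn_const).pow 2) hden
      · exact (continuousOn_const.mul (continuousOn_pow _))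
      · exact ContinuousOn.div (continuousOn_pow _)
          (((continuousOn_pow _).sub continuousOn_const).pow 2) hden
    have hFint : IntegrableOn F (Set.Icc (0 : ℝ) (rstar / 2)) :=
      hcont.integrableOn_Icc
    have hFint' : IntegrableOn F (Set.Ioo (0 : ℝ) (rstar / 2)) :=
      hFint.mono_set Set.Ioo_subset_Icc_self
    refine hFint'.congr_fun (fun z hz => ?_) measurableSet_Ioo
    have hz' : z ∈ Set.Ioo (0 : ℝ) rstar := ⟨hz.1, by linarith [hz.2]⟩
    rw [hb z hz', hd z hz', ha z hz', hF]
    rw [one_div_div]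
  · -- Part 2: non-integrability near rstar
    intro hint
    set R := rstar with hRdef
    set c0 : ℝ := (R / 2) ^ (3 * n - 2) with hc0
    set K : ℝ := ((n : ℝ) - 1) ^ 2 * R ^ (2 * (n - 2)) with hK
    have hc0pos : 0 < c0 := by positivity
    have hKpos : 0 < K := by
      have : (0 : ℝ) < (n : ℝ) - 1 := by
        have : (2 : ℝ) ≤ (n : ℝ) := by exact_mod_cast hn
        linarith
      positivity
    -- lower bound: for r ∈ (R/2, R), c0 / K * ((R - r)^2)⁻¹ ≤ a r
    have hbound : ∀ r ∈ Set.Ioo (R / 2) R,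
        c0 / K * ((R - r) ^ 2)⁻¹ ≤ a r := by
      intro r hr
      have hr0 : 0 < r := lt_trans (by linarith) hr.1
      have hr' : r ∈ Set.Ioo (0 : ℝ) R := ⟨hr0, hr.2⟩
      rw [ha r hr']
      -- the denominator bound
      have hsum : R ^ (n - 1) - r ^ (n - 1) =
          (∑ i ∈ Finset.range (n - 1), R ^ i * r ^ (n - 1 - 1 - i)) * (R - r) := by
        rw [geom_sum₂_mul]
      have hsumle : (∑ i ∈ Finset.range (n - 1), R ^ i * r ^ (n - 1 - 1 - i))
          ≤ ((n : ℝ) - 1) * R ^ (n - 2) := by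
        have : ∀ i ∈ Finset.range (n - 1),
            R ^ i * r ^ (n - 1 - 1 - i) ≤ R ^ (n - 2) := by
          intro i hi
          have hi' : i < n - 1 := Finset.mem_range.mp hi
          calc R ^ i * r ^ (n - 1 - 1 - i) ≤ R ^ i * R ^ (n - 1 - 1 - i) := by
                apply mul_le_mul_of_nonneg_left
                  (pow_le_pow_left₀ hr0.le hr.2.le _) (by positivity)
            _ = R ^ (i + (n - 1 - 1 - i)) := by rw [pow_add]
            _ = R ^ (n - 2) := by congr 1; omega
        calc (∑ i ∈ Finset.range (n - 1), R ^ i * r ^ (n - 1 - 1 - i))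
            ≤ ∑ _i ∈ Finset.range (n - 1), R ^ (n - 2) :=
              Finset.sum_le_sum this
          _ = ((n : ℝ) - 1) * R ^ (n - 2) := by
              rw [Finset.sum_const, Finset.card_range, nsmul_eq_mul]
              congr 1
              have : (1 : ℝ) ≤ (n : ℝ) := by exact_mod_cast (by omega : 1 ≤ n)
              push_cast [Nat.cast_sub (by omega : 1 ≤ n)]
              ring
      have hdiff : 0 ≤ R ^ (n - 1) - r ^ (n - 1) := by
        have := pow_le_pow_left₀ hr0.le hr.2.le (n - 1)
        linarith
      have hdenle : (r ^ (n - 1) - R ^ (n - 1)) ^ 2 ≤ (R - r) ^ 2 * K := by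
        have h1 : (r ^ (n - 1) - R ^ (n - 1)) ^ 2 =
            (R ^ (n - 1) - r ^ (n - 1)) ^ 2 := by ring
        rw [h1, hsum]
        have hRr : (0 : ℝ) ≤ R - r := by linarith [hr.2]
        have hsumnn : (0 : ℝ) ≤ ∑ i ∈ Finset.range (n - 1),
            R ^ i * r ^ (n - 1 - 1 - i) := by
          apply Finset.sum_nonneg
          intro i _
          positivity
        have : ((∑ i ∈ Finset.range (n - 1), R ^ i * r ^ (n - 1 - 1 - i)) * (R - r)) ^ 2
            ≤ (((n : ℝ) - 1) * R ^ (n - 2) * (R - r)) ^ 2 := by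
          apply pow_le_pow_left₀ (by positivity)
          exact mul_le_mul_of_nonneg_right hsumle hRr
        calc ((∑ i ∈ Finset.range (n - 1), R ^ i * r ^ (n - 1 - 1 - i)) * (R - r)) ^ 2
            ≤ (((n : ℝ) - 1) * R ^ (n - 2) * (R - r)) ^ 2 := this
          _ = (R - r) ^ 2 * K := by
              have hpow : (R ^ (n - 2)) ^ 2 = R ^ (2 * (n - 2)) := by
                rw [← pow_mul, mul_comm]
              rw [hK, ← hpow]; ring
      have hdenpos : 0 < (r ^ (n - 1) - R ^ (n - 1)) ^ 2 := by
        have h2 : r ^ (n - 1) < R ^ (n - 1) :=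
          pow_lt_pow_left₀ hr.2 hr0.le (by omega)
        have : r ^ (n - 1) - R ^ (n - 1) ≠ 0 := by linarith
        positivity
      have hnum : c0 ≤ r ^ (3 * n - 2) :=
        pow_le_pow_left₀ (by linarith) hr.1.le _
      have hRrpos : (0 : ℝ) < (R - r) ^ 2 := by
        have : r < R := hr.2
        have : R - r ≠ 0 := by linarith
        positivity
      calc c0 / K * ((R - r) ^ 2)⁻¹ = c0 / ((R - r) ^ 2 * K) := by
            rw [← div_eq_mul_inv, div_div, mul_comm]
        _ ≤ r ^ (3 * n - 2) / (r ^ (n - 1) - R ^ (n - 1)) ^ 2 :=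
            div_le_div₀ (by positivity) hnum hdenpos hdenle
    -- the lower bound function is integrable
    have hmeas : AEStronglyMeasurable (fun r : ℝ => c0 / K * ((R - r) ^ 2)⁻¹)
        (volume.restrict (Set.Ioo (R / 2) R)) := by
      apply Measurable.aestronglyMeasurable
      exact (measurable_const.mul (((measurable_const.sub measurable_id).pow_const 2).inv))
    have hgint : IntegrableOn (fun r : ℝ => c0 / K * ((R - r) ^ 2)⁻¹)
        (Set.Ioo (R / 2) R) := by
      refine MeasureTheory.Integrable.mono hint hmeas ?_
      rw [ae_restrict_iff' measurableSet_Ioo]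
      filter_upwards with r
      intro hr
      have h1 : 0 ≤ c0 / K * ((R - r) ^ 2)⁻¹ := by positivity
      have h2 := hbound r hr
      rw [Real.norm_eq_abs, Real.norm_eq_abs, abs_of_nonneg h1]
      exact h2.trans (le_abs_self _)
    -- strip the constant
    have hgint2 : IntegrableOn (fun r : ℝ => ((R - r) ^ 2)⁻¹)
        (Set.Ioo (R / 2) R) := by
      have h5 : IntegrableOn (fun x : ℝ => K / c0 * (c0 / K * ((R - x) ^ 2)⁻¹))
          (Set.Ioo (R / 2) R) := hgint.const_mul (K / c0)
      refine h5.congr_fun (fun r _ => ?_) measurableSet_Ioo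
      field_simp
    -- transfer to the origin
    have hIoo : IntegrableOn (fun x : ℝ => (x ^ 2)⁻¹) (Set.Ioo (0 : ℝ) (R / 2)) := by
      have h1 : IntervalIntegrable (fun r : ℝ => ((R - r) ^ 2)⁻¹) volume (R / 2) R := by
        rw [intervalIntegrable_iff_integrableOn_Ioo_of_le (by linarith)]
        exact hgint2
      have h2 := h1.comp_sub_left R
      have hRR : R - R = 0 := by ring
      have hRh : R - R / 2 = R / 2 := by ring
      rw [hRR, hRh] at h2
      have h3 : IntervalIntegrable (fun x : ℝ => ((R - (R - x)) ^ 2)⁻¹) volume 0 (R / 2) :=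
        h2.symm
      have h4 : IntervalIntegrable (fun x : ℝ => (x ^ 2)⁻¹) volume 0 (R / 2) := by
        refine h3.congr (fun x _ => ?_)
        simp
      rw [intervalIntegrable_iff_integrableOn_Ioo_of_le (by linarith)] at h4
      exact h4
    -- contradiction with x^(-2) not integrable
    have hnot : ¬ IntegrableOn (fun x : ℝ => x ^ (-2 : ℝ)) (Set.Ioo (0 : ℝ) (R / 2)) := by
      rw [intervalIntegral.integrableOn_Ioo_rpow_iff hR2]
      norm_num
    apply hnot
    refine hIoo.congr_fun (fun x hx => ?_) measurableSet_Ioo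
    rw [Real.rpow_neg hx.1.le]
    norm_num
end

section
/- Let $b : (0,\infty) \to (0,\infty)$ be continuous and $a : (0,\infty) \to (0,\infty)$ locally integrable with $\int^{+\infty}(1/b(z) + a(z))\,dz < +\infty$. Then every $u \in H^1_{loc}((0,\infty))$ with $\int_0^\infty (b|u'|^2 + a|u|^2) < \infty$ satisfies: $u'$ is integrable on $[z', \infty)$ for each $z' > 0$ and $\lim_{z \to \infty} u(z)$ exists (possibly nonzero). Consequently, the set of compactly supported functions in the weighted space $\mathcal{E}_0 = \{u : \int_0^\infty(b|u'|^2 + a|u|^2) < \infty\}$ is NOT dense in $\mathcal{E}_0$. -/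
open MeasureTheory Set Filter

-- integrability of 1/b on Ici z'
lemma aux_oneDivB (a b : ℝ → ℝ)
    (hb_cont : ContinuousOn b (Set.Ioi (0 : ℝ)))
    (hb_pos : ∀ z ∈ Set.Ioi (0 : ℝ), 0 < b z)
    (ha_pos : ∀ z ∈ Set.Ioi (0 : ℝ), 0 < a z)
    (z₀ : ℝ) (hz₀ : 0 < z₀)
    (hfin : IntegrableOn (fun z => 1 / b z + a z) (Set.Ioi z₀)) :
    ∀ z' > (0:ℝ), IntegrableOn (fun z => 1 / b z) (Set.Ici z') := by
  have hbne : ∀ z ∈ Set.Ioi (0:ℝ), b z ≠ 0 := fun z hz => (hb_pos z hz).ne'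
  have hcont : ContinuousOn (fun z => 1 / b z) (Set.Ioi (0:ℝ)) :=
    continuousOn_const.div hb_cont hbne
  have hIoi : IntegrableOn (fun z => 1 / b z) (Set.Ioi z₀) := by
    refine hfin.mono' ?_ ?_
    · exact (hcont.mono (fun z hz => lt_trans hz₀ hz)).aestronglyMeasurable measurableSet_Ioi
    · filter_upwards [ae_restrict_mem measurableSet_Ioi] with z hz
      have hz0 : z ∈ Set.Ioi (0:ℝ) := lt_trans hz₀ hz
      have h1 : 0 < 1 / b z := by
        have := hb_pos z hz0; positivity
      rw [Real.norm_eq_abs, abs_of_pos h1]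
      linarith [(ha_pos z hz0).le]
  intro z' hz'
  have hIcc : IntegrableOn (fun z => 1 / b z) (Set.Icc z' z₀) := by
    apply (hcont.mono ?_).integrableOn_compact isCompact_Icc
    intro z hz; exact lt_of_lt_of_le hz' hz.1
  have hsub : Set.Ici z' ⊆ Set.Icc z' z₀ ∪ Set.Ioi z₀ := by
    intro z hz
    rcases le_or_gt z z₀ with h | h
    · exact Or.inl ⟨hz, h⟩
    · exact Or.inr h
  exact (hIcc.union hIoi).mono_set hsub

lemma aux_part1 (a b : ℝ → ℝ)
    (hb_cont : ContinuousOn b (Set.Ioi (0 : ℝ)))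
    (hb_pos : ∀ z ∈ Set.Ioi (0 : ℝ), 0 < b z)
    (ha_pos : ∀ z ∈ Set.Ioi (0 : ℝ), 0 < a z)
    (z₀ : ℝ) (hz₀ : 0 < z₀)
    (hfin : IntegrableOn (fun z => 1 / b z + a z) (Set.Ioi z₀))
    (u : ℝ → ℝ) (hud : DifferentiableOn ℝ u (Set.Ioi 0))
    (hui : IntegrableOn (fun z => b z * (deriv u z) ^ 2 + a z * (u z) ^ 2) (Set.Ioi 0)) :
    (∀ z' > (0 : ℝ), IntegrableOn (deriv u) (Set.Ici z')) ∧
      (∃ L : ℝ, Tendsto u atTop (nhds L)) := by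
  -- b * (deriv u)^2 integrable on Ioi 0
  have hbu2 : IntegrableOn (fun z => b z * (deriv u z) ^ 2) (Set.Ioi (0:ℝ)) := by
    refine hui.mono' ?_ ?_
    · exact ((hb_cont.aestronglyMeasurable measurableSet_Ioi).aemeasurable.mul
        ((measurable_deriv u).aemeasurable.pow_const 2).restrict).aestronglyMeasurable
    · filter_upwards [ae_restrict_mem measurableSet_Ioi] with z hz
      have hb := hb_pos z hz
      have ha := ha_pos z hz
      have : (0:ℝ) ≤ b z * (deriv u z)^2 := by positivity
      rw [Real.norm_eq_abs, abs_of_nonneg this]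
      nlinarith [sq_nonneg (u z)]
  have hderiv : ∀ z' > (0 : ℝ), IntegrableOn (deriv u) (Set.Ici z') := by
    intro z' hz'
    have h1b := aux_oneDivB a b hb_cont hb_pos ha_pos z₀ hz₀ hfin z' hz'
    have hsub : Set.Ici z' ⊆ Set.Ioi (0:ℝ) := fun z hz => lt_of_lt_of_le hz' hz
    refine ((h1b.add (hbu2.mono_set hsub)).div_const 2).mono' ?_ ?_
    · exact (measurable_deriv u).aestronglyMeasurable.restrict
    · filter_upwards [ae_restrict_mem measurableSet_Ici] with z hz
      have hb := hb_pos z (hsub hz)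
      rw [Real.norm_eq_abs]
      have key : 2 * (b z * |deriv u z|) ≤ b z * b z * (deriv u z)^2 + 1 := by
        nlinarith [sq_nonneg (b z * |deriv u z| - 1), sq_abs (deriv u z), abs_nonneg (deriv u z)]
      have hbi : b z * (1 / b z) = 1 := mul_one_div_cancel hb.ne'
      simp only [Pi.add_apply]
      nlinarith [key, hb, hbi]
  refine ⟨hderiv, ?_⟩
  have hint : IntegrableOn (deriv u) (Set.Ici z₀) := hderiv z₀ hz₀
  have hint' : IntegrableOn (deriv u) (Set.Ioi z₀) := hint.mono_set Set.Ioi_subset_Ici_self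
  have hF : Tendsto (fun z => ∫ t in z₀..z, deriv u t) atTop
      (nhds (∫ t in Set.Ioi z₀, deriv u t)) :=
    intervalIntegral_tendsto_integral_Ioi z₀ hint' tendsto_id
  refine ⟨u z₀ + ∫ t in Set.Ioi z₀, deriv u t, ?_⟩
  have heq : ∀ᶠ z in atTop, u z = u z₀ + ∫ t in z₀..z, deriv u t := by
    filter_upwards [eventually_ge_atTop z₀] with z hz
    have hftc : ∫ t in z₀..z, deriv u t = u z - u z₀ := by
      apply intervalIntegral.integral_eq_sub_of_hasDerivAt
      · intro t ht
        rw [Set.uIcc_of_le hz] at ht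
        have ht0 : t ∈ Set.Ioi (0:ℝ) := lt_of_lt_of_le hz₀ ht.1
        exact ((hud t ht0).differentiableAt (Ioi_mem_nhds ht0)).hasDerivAt
      · exact (hint.mono_set (by rw [Set.uIcc_of_le hz]; exact fun t ht => ht.1)).intervalIntegrable
    rw [hftc]; ring
  exact (tendsto_const_nhds.add hF).congr' (heq.mono fun z h => h.symm)

section
variable (z₀ : ℝ)

noncomputable def W (z₀ : ℝ) (z : ℝ) : ℝ := Real.smoothTransition (z - z₀)

lemma W_contDiff : ContDiff ℝ 1 (W z₀) :=
  Real.smoothTransition.contDiff.comp (contDiff_id.sub contDiff_const)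

lemma W_diff : Differentiable ℝ (W z₀) := (W_contDiff z₀).differentiable one_ne_zero

lemma W_zero {z : ℝ} (h : z ≤ z₀) : W z₀ z = 0 :=
  Real.smoothTransition.zero_of_nonpos (by linarith)

lemma W_one {z : ℝ} (h : z₀ + 1 ≤ z) : W z₀ z = 1 :=
  Real.smoothTransition.one_of_one_le (by linarith)

lemma W_nonneg (z : ℝ) : 0 ≤ W z₀ z := Real.smoothTransition.nonneg _

lemma W_le_one (z : ℝ) : W z₀ z ≤ 1 := Real.smoothTransition.le_one _

lemma W_deriv_zero_lt {z : ℝ} (h : z < z₀) : deriv (W z₀) z = 0 := by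
  have hev : W z₀ =ᶠ[nhds z] fun _ => (0:ℝ) := by
    filter_upwards [Iio_mem_nhds h] with t ht
    exact W_zero z₀ (le_of_lt ht)
  rw [hev.deriv_eq, deriv_const]

lemma W_deriv_zero_gt {z : ℝ} (h : z₀ + 1 < z) : deriv (W z₀) z = 0 := by
  have hev : W z₀ =ᶠ[nhds z] fun _ => (1:ℝ) := by
    filter_upwards [Ioi_mem_nhds h] with t ht
    exact W_one z₀ (le_of_lt ht)
  rw [hev.deriv_eq, deriv_const]

lemma W_deriv_cont : Continuous (deriv (W z₀)) :=
  (W_contDiff z₀).continuous_deriv le_rfl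

end

lemma aux_a_int (a b : ℝ → ℝ)
    (hb_pos : ∀ z ∈ Set.Ioi (0 : ℝ), 0 < b z)
    (ha_pos : ∀ z ∈ Set.Ioi (0 : ℝ), 0 < a z)
    (ha_loc : LocallyIntegrableOn a (Set.Ioi (0 : ℝ)))
    (z₀ : ℝ) (hz₀ : 0 < z₀)
    (hfin : IntegrableOn (fun z => 1 / b z + a z) (Set.Ioi z₀)) :
    IntegrableOn a (Set.Ioi z₀) := by
  refine hfin.mono' (ha_loc.aestronglyMeasurable.mono_measure
    (Measure.restrict_mono (Set.Ioi_subset_Ioi hz₀.le) le_rfl)) ?_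
  filter_upwards [ae_restrict_mem measurableSet_Ioi] with z hz
  have hz0 : z ∈ Set.Ioi (0:ℝ) := lt_trans hz₀ hz
  have hb := hb_pos z hz0
  have ha := ha_pos z hz0
  rw [Real.norm_eq_abs, abs_of_pos ha]
  have : 0 < 1 / b z := by positivity
  linarith

lemma aux_W_energy (a b : ℝ → ℝ)
    (hb_cont : ContinuousOn b (Set.Ioi (0 : ℝ)))
    (hb_pos : ∀ z ∈ Set.Ioi (0 : ℝ), 0 < b z)
    (ha_pos : ∀ z ∈ Set.Ioi (0 : ℝ), 0 < a z)
    (ha_loc : LocallyIntegrableOn a (Set.Ioi (0 : ℝ)))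
    (z₀ : ℝ) (hz₀ : 0 < z₀)
    (hfin : IntegrableOn (fun z => 1 / b z + a z) (Set.Ioi z₀)) :
    IntegrableOn (fun z => b z * (deriv (W z₀) z) ^ 2 + a z * (W z₀ z) ^ 2)
      (Set.Ioi (0:ℝ)) := by
  have haI : IntegrableOn a (Set.Ioi z₀) :=
    aux_a_int a b hb_pos ha_pos ha_loc z₀ hz₀ hfin
  have hcover : Set.Ioi (0:ℝ) ⊆ Set.Ioo 0 z₀ ∪ (Set.Icc z₀ (z₀+1) ∪ Set.Ioi (z₀+1)) := by
    intro z hz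
    rcases lt_or_ge z z₀ with h | h
    · exact Or.inl ⟨hz, h⟩
    rcases le_or_gt z (z₀+1) with h2 | h2
    · exact Or.inr (Or.inl ⟨h, h2⟩)
    · exact Or.inr (Or.inr h2)
  refine IntegrableOn.mono_set ?_ hcover
  refine IntegrableOn.union ?_ (IntegrableOn.union ?_ ?_)
  · -- zero on Ioo 0 z₀
    rw [integrableOn_congr_fun (g := fun _ => (0:ℝ)) ?_ measurableSet_Ioo]
    · exact integrableOn_zero
    · intro z hz
      simp [W_deriv_zero_lt z₀ hz.2, W_zero z₀ hz.2.le]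
  · -- Icc z₀ (z₀+1)
    have hsub : Set.Icc z₀ (z₀+1) ⊆ Set.Ioi (0:ℝ) := fun z hz => lt_of_lt_of_le hz₀ hz.1
    have h1 : IntegrableOn (fun z => b z * (deriv (W z₀) z)^2) (Set.Icc z₀ (z₀+1)) := by
      apply ContinuousOn.integrableOn_compact isCompact_Icc
      exact (hb_cont.mono hsub).mul ((W_deriv_cont z₀).continuousOn.pow 2)
    have haIcc : IntegrableOn a (Set.Icc z₀ (z₀+1)) :=
      ha_loc.integrableOn_compact_subset hsub isCompact_Icc
    have h2 : IntegrableOn (fun z => a z * (W z₀ z)^2) (Set.Icc z₀ (z₀+1)) := by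
      refine haIcc.mono' ?_ ?_
      · exact haIcc.aestronglyMeasurable.mul
          (((W_diff z₀).continuous.pow 2).aestronglyMeasurable.restrict)
      · filter_upwards [ae_restrict_mem measurableSet_Icc] with z hz
        have ha := ha_pos z (hsub hz)
        rw [Real.norm_eq_abs, abs_mul, abs_of_pos ha, abs_of_nonneg (sq_nonneg _)]
        have hW2 : (W z₀ z)^2 ≤ 1 := by nlinarith [W_nonneg z₀ z, W_le_one z₀ z]
        nlinarith [mul_le_mul_of_nonneg_left hW2 ha.le]
    exact h1.add h2
  · -- Ioi (z₀+1) : equals a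
    rw [integrableOn_congr_fun (g := a) ?_ measurableSet_Ioi]
    · exact haI.mono_set (fun z hz => lt_trans (by linarith : z₀ < z₀ + 1) hz)
    · intro z hz
      simp [W_deriv_zero_gt z₀ hz, W_one z₀ (le_of_lt hz)]

lemma amgm (L β G : ℝ) (hL : 0 < L) (hβ : 0 < β) :
    |G| ≤ (L * (β * G ^ 2) + (1/L) * (1/β)) / 2 := by
  have hc : 0 < L * β := mul_pos hL hβ
  have key : 2 * ((L * β) * |G|) ≤ (L * β) * (L * β) * G ^ 2 + 1 := by
    nlinarith [sq_nonneg (L * β * |G| - 1), sq_abs G, abs_nonneg G]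
  have hci : (L * β) * (1 / (L * β)) = 1 := mul_one_div_cancel hc.ne'
  have hrw : (1/L) * (1/β) = 1 / (L * β) := one_div_mul_one_div L β
  rw [hrw]
  nlinarith [key, hc, hci]

lemma aux_part2 (a b : ℝ → ℝ)
    (hb_cont : ContinuousOn b (Set.Ioi (0 : ℝ)))
    (hb_pos : ∀ z ∈ Set.Ioi (0 : ℝ), 0 < b z)
    (ha_pos : ∀ z ∈ Set.Ioi (0 : ℝ), 0 < a z)
    (ha_loc : LocallyIntegrableOn a (Set.Ioi (0 : ℝ)))
    (z₀ : ℝ) (hz₀ : 0 < z₀)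
    (hfin : IntegrableOn (fun z => 1 / b z + a z) (Set.Ioi z₀)) :
    ∃ ε > (0 : ℝ), ∀ v : ℝ → ℝ,
        (DifferentiableOn ℝ v (Set.Ioi 0) ∧
          IntegrableOn (fun z => b z * (deriv v z) ^ 2 + a z * (v z) ^ 2) (Set.Ioi 0)) →
        HasCompactSupport v →
        ε ≤ ∫ z in Set.Ioi (0 : ℝ),
          (b z * (deriv (W z₀) z - deriv v z) ^ 2 + a z * (W z₀ z - v z) ^ 2) := by
  have haI : IntegrableOn a (Set.Ioi z₀) := aux_a_int a b hb_pos ha_pos ha_loc z₀ hz₀ hfin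
  have h1bI : IntegrableOn (fun z => 1 / b z) (Set.Ioi z₀) :=
    (aux_oneDivB a b hb_cont hb_pos ha_pos z₀ hz₀ hfin z₀ hz₀).mono_set Set.Ioi_subset_Ici_self
  set A := ∫ z in Set.Ioi z₀, a z with hAdef
  set B := ∫ z in Set.Ioi z₀, 1 / b z with hBdef
  have hA : 0 < A := by
    rw [hAdef, setIntegral_pos_iff_support_of_nonneg_ae ?_ haI]
    · have : Function.support a ∩ Set.Ioi z₀ = Set.Ioi z₀ := by
        rw [Set.inter_eq_right]
        intro z hz
        exact (ha_pos z (lt_trans hz₀ hz)).ne'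
      rw [this]
      simp [Real.volume_Ioi]
    · filter_upwards [ae_restrict_mem measurableSet_Ioi] with z hz
      exact (ha_pos z (lt_trans hz₀ hz)).le
  have hB : 0 ≤ B := by
    apply setIntegral_nonneg measurableSet_Ioi
    intro z hz
    have := hb_pos z (lt_trans hz₀ hz)
    positivity
  set lam := 4 * B + 1 with hlamdef
  have hlam : 0 < lam := by positivity
  set ε := min (A / 32) (1 / (4 * lam)) with hεdef
  have hε : 0 < ε := lt_min (by positivity) (by positivity)
  refine ⟨ε, hε, ?_⟩
  rintro v ⟨hvd, hvi⟩ hvsupp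
  clear_value A B lam ε
  set g := fun z => deriv (W z₀) z - deriv v z with hgdef
  set w := fun z => W z₀ z - v z with hwdef
  set F := fun z => b z * (g z) ^ 2 + a z * (w z) ^ 2 with hFdef
  have hui := aux_W_energy a b hb_cont hb_pos ha_pos ha_loc z₀ hz₀ hfin
  -- measurability helpers
  have hbm : AEMeasurable b (volume.restrict (Set.Ioi (0:ℝ))) :=
    (hb_cont.aestronglyMeasurable measurableSet_Ioi).aemeasurable
  have ham : AEMeasurable a (volume.restrict (Set.Ioi (0:ℝ))) :=
    ha_loc.aestronglyMeasurable.aemeasurable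
  have hgm : AEMeasurable g (volume.restrict (Set.Ioi (0:ℝ))) :=
    ((measurable_deriv (W z₀)).sub (measurable_deriv v)).aemeasurable
  have hwm : AEMeasurable w (volume.restrict (Set.Ioi (0:ℝ))) :=
    ((W_diff z₀).continuous.aemeasurable.sub
      ((hvd.continuousOn.aemeasurable measurableSet_Ioi)))
  have hFm : AEStronglyMeasurable F (volume.restrict (Set.Ioi (0:ℝ))) :=
    ((hbm.mul (hgm.pow_const 2)).add (ham.mul (hwm.pow_const 2))).aestronglyMeasurable
  have hFnonneg : ∀ z ∈ Set.Ioi (0:ℝ), 0 ≤ F z := by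
    intro z hz
    have hb := hb_pos z hz
    have ha := ha_pos z hz
    have := sq_nonneg (g z); have := sq_nonneg (w z)
    positivity
  have hFnonneg_ae : 0 ≤ᵐ[volume.restrict (Set.Ioi (0:ℝ))] F := by
    filter_upwards [ae_restrict_mem measurableSet_Ioi] with z hz using hFnonneg z hz
  have hFint : IntegrableOn F (Set.Ioi (0:ℝ)) := by
    refine ((hui.add hvi).const_mul 2).mono' hFm ?_
    filter_upwards [ae_restrict_mem measurableSet_Ioi] with z hz
    have hb := hb_pos z hz
    have ha := ha_pos z hz
    rw [Real.norm_eq_abs, abs_of_nonneg (hFnonneg z hz)]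
    have h1 : (deriv (W z₀) z - deriv v z)^2 ≤ 2 * (deriv (W z₀) z)^2 + 2 * (deriv v z)^2 := by
      nlinarith [sq_nonneg (deriv (W z₀) z + deriv v z)]
    have h2 : (W z₀ z - v z)^2 ≤ 2 * (W z₀ z)^2 + 2 * (v z)^2 := by
      nlinarith [sq_nonneg (W z₀ z + v z)]
    have h3 := mul_le_mul_of_nonneg_left h1 hb.le
    have h4 := mul_le_mul_of_nonneg_left h2 ha.le
    simp only [Pi.add_apply]
    simp only [hFdef, hgdef, hwdef]
    linarith [h3, h4]
  have hbg2 : IntegrableOn (fun z => b z * (g z)^2) (Set.Ioi (0:ℝ)) := by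
    refine hFint.mono' ((hbm.mul (hgm.pow_const 2)).aestronglyMeasurable) ?_
    filter_upwards [ae_restrict_mem measurableSet_Ioi] with z hz
    have hb := hb_pos z hz
    have ha := ha_pos z hz
    rw [Real.norm_eq_abs, abs_of_nonneg (by positivity)]
    simp only [hFdef]
    nlinarith [mul_nonneg ha.le (sq_nonneg (w z))]
  have hgoalF : (fun z => b z * (deriv (W z₀) z - deriv v z) ^ 2 + a z * (W z₀ z - v z) ^ 2)
      = F := by
    funext z; simp only [hFdef, hgdef, hwdef]
  rw [show (∫ z in Set.Ioi (0:ℝ),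
      (b z * (deriv (W z₀) z - deriv v z) ^ 2 + a z * (W z₀ z - v z) ^ 2))
      = ∫ z in Set.Ioi (0:ℝ), F z from by rw [hgoalF]]
  set E := ∫ z in Set.Ioi (0:ℝ), F z with hEdef
  clear_value E
  by_contra hcon
  push_neg at hcon
  have hEε : E < ε := hcon
  have hE0 : 0 ≤ E := by
    rw [hEdef]; exact setIntegral_nonneg measurableSet_Ioi hFnonneg
  -- find z₁ where w is small
  have hz₁ : ∃ z₁ ∈ Set.Ioi z₀, (w z₁)^2 ≤ 2 * ε / A := by
    by_contra h
    push_neg at h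
    have hineq : 2 * ε ≤ E := by
      have step1 : ∫ z in Set.Ioi z₀, a z * (2 * ε / A) ≤ ∫ z in Set.Ioi z₀, F z := by
        refine setIntegral_mono_on (haI.mul_const _) (hFint.mono_set (Set.Ioi_subset_Ioi hz₀.le))
          measurableSet_Ioi ?_
        intro z hz
        have hz0 : z ∈ Set.Ioi (0:ℝ) := lt_trans hz₀ hz
        have hb := hb_pos z hz0
        have ha := ha_pos z hz0
        have hlt := (h z hz).le
        simp only [hFdef]
        have h1 := mul_le_mul_of_nonneg_left hlt ha.le
        have h2 := mul_nonneg hb.le (sq_nonneg (g z))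
        exact le_trans h1 (le_add_of_nonneg_left h2)
      have step2 : ∫ z in Set.Ioi z₀, F z ≤ E := by
        rw [hEdef]
        exact setIntegral_mono_set hFint hFnonneg_ae
          (HasSubset.Subset.eventuallyLE (Set.Ioi_subset_Ioi hz₀.le))
      have step0 : ∫ z in Set.Ioi z₀, a z * (2 * ε / A) = 2 * ε := by
        rw [integral_mul_const, ← hAdef]
        field_simp
      linarith
    linarith
  obtain ⟨z₁, hz₁mem, hz₁small⟩ := hz₁
  have hz₁0 : (0:ℝ) < z₁ := lt_trans hz₀ hz₁mem
  -- choose z₂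
  obtain ⟨R, hR⟩ := hvsupp.isCompact.bddAbove
  set z₂ := max z₁ (max (z₀ + 1) (R + 1)) with hz₂def
  have hz₁₂ : z₁ ≤ z₂ := le_max_left _ _
  have hz₂1 : z₀ + 1 ≤ z₂ := le_trans (le_max_left _ _) (le_max_right _ _)
  have hz₂R : R + 1 ≤ z₂ := le_trans (le_max_right _ _) (le_max_right _ _)
  have hvz₂ : v z₂ = 0 := by
    apply image_eq_zero_of_notMem_tsupport
    intro hmem
    have := hR hmem
    linarith
  have hwz₂ : w z₂ = 1 := by
    simp only [hwdef]
    rw [W_one z₀ hz₂1, hvz₂]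
    ring
  -- integrability of g on Ici z₁
  have hgIci : IntegrableOn g (Set.Ici z₁) := by
    have h1 := (aux_part1 a b hb_cont hb_pos ha_pos z₀ hz₀ hfin (W z₀)
      (W_diff z₀).differentiableOn hui).1 z₁ hz₁0
    have h2 := (aux_part1 a b hb_cont hb_pos ha_pos z₀ hz₀ hfin v hvd hvi).1 z₁ hz₁0
    exact h1.sub h2
  have huIcc : Set.uIcc z₁ z₂ = Set.Icc z₁ z₂ := Set.uIcc_of_le hz₁₂
  have hIccsub0 : Set.Icc z₁ z₂ ⊆ Set.Ioi (0:ℝ) := fun t ht => lt_of_lt_of_le hz₁0 ht.1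
  -- FTC
  have hftc : ∫ t in z₁..z₂, g t = w z₂ - w z₁ := by
    apply intervalIntegral.integral_eq_sub_of_hasDerivAt
    · intro t ht
      rw [huIcc] at ht
      have ht0 : t ∈ Set.Ioi (0:ℝ) := hIccsub0 ht
      exact (((W_diff z₀) t).hasDerivAt).sub
        (((hvd t ht0).differentiableAt (Ioi_mem_nhds ht0)).hasDerivAt)
    · exact (hgIci.mono_set (by rw [huIcc]; exact fun t ht => ht.1)).intervalIntegrable
  have hgInt : IntervalIntegrable g volume z₁ z₂ :=
    (hgIci.mono_set (by rw [huIcc]; exact fun t ht => ht.1)).intervalIntegrable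
  have hbg2Int : IntervalIntegrable (fun t => b t * (g t)^2) volume z₁ z₂ :=
    (hbg2.mono_set (by rw [huIcc]; exact hIccsub0)).intervalIntegrable
  have h1bInt : IntervalIntegrable (fun t => 1 / b t) volume z₁ z₂ := by
    refine ((aux_oneDivB a b hb_cont hb_pos ha_pos z₀ hz₀ hfin z₁ hz₁0).mono_set ?_).intervalIntegrable
    rw [huIcc]; exact fun t ht => ht.1
  -- pointwise AM-GM bound and integral bound
  have hptwise : ∀ t ∈ Set.Icc z₁ z₂,
      |g t| ≤ (lam * (b t * (g t)^2) + (1/lam) * (1 / b t)) / 2 := by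
    intro t ht
    have hb := hb_pos t (hIccsub0 ht)
    have := amgm lam (b t) (g t) hlam hb
    simpa using this
  have habs : |∫ t in z₁..z₂, g t| ≤ ∫ t in z₁..z₂, |g t| :=
    intervalIntegral.abs_integral_le_integral_abs hz₁₂
  have hmono : ∫ t in z₁..z₂, |g t|
      ≤ ∫ t in z₁..z₂, (lam * (b t * (g t)^2) + (1/lam) * (1 / b t)) / 2 := by
    apply intervalIntegral.integral_mono_on hz₁₂ hgInt.abs
      (((hbg2Int.const_mul lam).add (h1bInt.const_mul (1/lam))).div_const 2) hptwise
  have hsplit : ∫ t in z₁..z₂, (lam * (b t * (g t)^2) + (1/lam) * (1 / b t)) / 2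
      = (lam * (∫ t in z₁..z₂, b t * (g t)^2) + (1/lam) * (∫ t in z₁..z₂, 1 / b t)) / 2 := by
    rw [intervalIntegral.integral_div, intervalIntegral.integral_add
      (hbg2Int.const_mul lam) (h1bInt.const_mul (1/lam)),
      intervalIntegral.integral_const_mul, intervalIntegral.integral_const_mul]
  have hI1 : ∫ t in z₁..z₂, b t * (g t)^2 ≤ E := by
    rw [intervalIntegral.integral_of_le hz₁₂]
    have hIocsub : Set.Ioc z₁ z₂ ⊆ Set.Ioi (0:ℝ) := fun t ht => lt_trans hz₁0 ht.1
    calc ∫ t in Set.Ioc z₁ z₂, b t * (g t)^2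
        ≤ ∫ t in Set.Ioc z₁ z₂, F t := by
          refine setIntegral_mono_on (hbg2.mono_set hIocsub) (hFint.mono_set hIocsub)
            measurableSet_Ioc ?_
          intro t ht
          have ha := ha_pos t (hIocsub ht)
          simp only [hFdef]
          have := mul_nonneg ha.le (sq_nonneg (w t))
          linarith
      _ ≤ E := by
          rw [hEdef]
          exact setIntegral_mono_set hFint hFnonneg_ae
            (HasSubset.Subset.eventuallyLE hIocsub)
  have hI2 : ∫ t in z₁..z₂, 1 / b t ≤ B := by
    rw [intervalIntegral.integral_of_le hz₁₂, hBdef]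
    have hIocsub : Set.Ioc z₁ z₂ ⊆ Set.Ioi z₀ := fun t ht => lt_trans hz₁mem ht.1
    refine setIntegral_mono_set h1bI ?_ (HasSubset.Subset.eventuallyLE hIocsub)
    filter_upwards [ae_restrict_mem measurableSet_Ioi] with t ht
    have := hb_pos t (lt_trans hz₀ ht)
    positivity
  -- numeric conclusion
  have hI1' : ∫ t in z₁..z₂, b t * (g t)^2 ≥ 0 := by
    rw [intervalIntegral.integral_of_le hz₁₂]
    apply setIntegral_nonneg measurableSet_Ioc
    intro t ht
    have := hb_pos t (lt_trans hz₁0 ht.1)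
    positivity
  clear_value F g w z₂
  have hwz₁ : |w z₁| ≤ 1/4 := by
    have hεA : ε ≤ A / 32 := by rw [hεdef]; exact min_le_left _ _
    have : (w z₁)^2 ≤ 1/16 := by
      have h2 : 2 * ε / A ≤ 1/16 := by
        rw [div_le_iff₀ hA]
        linarith
      linarith
    linarith only [sq_nonneg (|w z₁| - 1/4), sq_abs (w z₁), this]
  have hεlam : ε ≤ 1 / (4 * lam) := by rw [hεdef]; exact min_le_right _ _
  have hdiff : |w z₂ - w z₁| ≤ 1/2 := by
    rw [← hftc]
    have hBlam : (1/lam) * B ≤ 1/4 := by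
      rw [hlamdef]
      rw [div_mul_eq_mul_div, one_mul, div_le_iff₀ (by positivity)]
      linarith
    have hlamE : lam * (∫ t in z₁..z₂, b t * (g t)^2) ≤ 1/4 := by
      have h1 : lam * (∫ t in z₁..z₂, b t * (g t)^2) ≤ lam * ε := by
        apply mul_le_mul_of_nonneg_left (le_of_lt (lt_of_le_of_lt hI1 hEε)) hlam.le
      have h2 : lam * ε ≤ 1/4 := by
        calc lam * ε ≤ lam * (1 / (4 * lam)) := mul_le_mul_of_nonneg_left hεlam hlam.le
          _ = 1/4 := by
              rw [mul_one_div, div_eq_div_iff (by positivity) (by norm_num : (4:ℝ) ≠ 0)]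
              ring
      linarith only [h1, h2]
    have hlamI2 : (1/lam) * (∫ t in z₁..z₂, 1 / b t) ≤ 1/4 := by
      calc (1/lam) * (∫ t in z₁..z₂, 1 / b t) ≤ (1/lam) * B := by
            apply mul_le_mul_of_nonneg_left hI2 (by positivity)
        _ ≤ 1/4 := hBlam
    calc |∫ t in z₁..z₂, g t| ≤ ∫ t in z₁..z₂, |g t| := habs
      _ ≤ (lam * (∫ t in z₁..z₂, b t * (g t)^2) + (1/lam) * (∫ t in z₁..z₂, 1 / b t)) / 2 := by
          rw [← hsplit]; exact hmono
      _ ≤ 1/2 := by linarith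
  have htri := abs_sub_abs_le_abs_sub (w z₂) (w z₁)
  have h1 : |w z₂| = 1 := by rw [hwz₂]; exact abs_one
  linarith [hwz₁, hdiff, htri, h1]

/-- If `∫^∞ (1/b + a) < ∞`, then every finite-energy `u`
(`∫ (b|u'|² + a|u|²) < ∞`) has `u'` integrable on `[z', ∞)` for each `z' > 0` and
`u(z)` has a (possibly nonzero) limit at infinity; consequently the compactly
supported finite-energy functions are NOT dense in the energy space. -/
theorem stmt17
    (a b : ℝ → ℝ)
    (hb_cont : ContinuousOn b (Set.Ioi (0 : ℝ)))
    (hb_pos : ∀ z ∈ Set.Ioi (0 : ℝ), 0 < b z)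
    (ha_pos : ∀ z ∈ Set.Ioi (0 : ℝ), 0 < a z)
    (ha_loc : LocallyIntegrableOn a (Set.Ioi (0 : ℝ)))
    (z₀ : ℝ) (hz₀ : 0 < z₀)
    (hfin : IntegrableOn (fun z => 1 / b z + a z) (Set.Ioi z₀)) :
    (∀ u : ℝ → ℝ, DifferentiableOn ℝ u (Set.Ioi 0) →
      IntegrableOn (fun z => b z * (deriv u z) ^ 2 + a z * (u z) ^ 2) (Set.Ioi 0) →
      (∀ z' > (0 : ℝ), IntegrableOn (deriv u) (Set.Ici z')) ∧
      (∃ L : ℝ, Tendsto u atTop (nhds L))) ∧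
    (∃ u : ℝ → ℝ,
      (DifferentiableOn ℝ u (Set.Ioi 0) ∧
        IntegrableOn (fun z => b z * (deriv u z) ^ 2 + a z * (u z) ^ 2) (Set.Ioi 0)) ∧
      ∃ ε > (0 : ℝ), ∀ v : ℝ → ℝ,
        (DifferentiableOn ℝ v (Set.Ioi 0) ∧
          IntegrableOn (fun z => b z * (deriv v z) ^ 2 + a z * (v z) ^ 2) (Set.Ioi 0)) →
        HasCompactSupport v →
        ε ≤ ∫ z in Set.Ioi (0 : ℝ),
          (b z * (deriv u z - deriv v z) ^ 2 + a z * (u z - v z) ^ 2)) := by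
  constructor
  · intro u hud hui
    exact aux_part1 a b hb_cont hb_pos ha_pos z₀ hz₀ hfin u hud hui
  · exact ⟨W z₀, ⟨(W_diff z₀).differentiableOn,
      aux_W_energy a b hb_cont hb_pos ha_pos ha_loc z₀ hz₀ hfin⟩,
      aux_part2 a b hb_cont hb_pos ha_pos ha_loc z₀ hz₀ hfin⟩
end

section
/- Let $b : (0,\infty) \to (0,\infty)$ be continuous with $\int_{z'}^{\infty} 1/b(z)\,dz < \infty$ and let $a$ be positive with $\int^{\infty} a(z)\,dz = \infty$. If $u \in H^1_{loc}$ satisfies $\int_0^\infty(b|u'|^2 + a|u|^2)\,dz < \infty$, then $\lim_{z\to\infty} u(z) = 0$ and hence $|u(z)| \le \sqrt{\beta_0(z)}\,(\int_z^\infty b|u'|^2)^{1/2}$ where $\beta_0(z) = \int_z^\infty 1/b$. -/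
open MeasureTheory Set Filter

set_option maxHeartbeats 1000000 in
/-- If `∫_{z'}^∞ 1/b < ∞` and `∫^∞ a = ∞`, then any finite-energy
`u` (`∫ (b|u'|² + a|u|²) < ∞`) tends to `0` at infinity and satisfies the bound
`|u z| ≤ √(β₀ z) (∫_z^∞ b|u'|²)^{1/2}` where `β₀ z = ∫_z^∞ 1/b`. -/
theorem stmt18
    (a b u u' : ℝ → ℝ) (z' : ℝ) (hz' : 0 < z')
    (hb_cont : ContinuousOn b (Set.Ioi (0 : ℝ)))
    (hb_pos : ∀ z ∈ Set.Ioi (0 : ℝ), 0 < b z)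
    (ha_pos : ∀ z ∈ Set.Ioi (0 : ℝ), 0 < a z)
    (hb_int : IntegrableOn (fun z => 1 / b z) (Set.Ioi z'))
    (ha_div : ∀ t > (0 : ℝ), ¬ IntegrableOn a (Set.Ioi t))
    (hu : ∀ z ∈ Set.Ioi (0 : ℝ), HasDerivAt u (u' z) z)
    (hu_energy : IntegrableOn (fun z => b z * (u' z) ^ 2 + a z * (u z) ^ 2)
      (Set.Ioi (0 : ℝ))) :
    Tendsto u atTop (nhds 0) ∧
    ∀ z, z' ≤ z →
      |u z| ≤ Real.sqrt (∫ s in Set.Ioi z, 1 / b s) *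
        Real.sqrt (∫ s in Set.Ioi z, b s * (u' s) ^ 2) := by
  -- measurability of u'
  have hu'_meas : AEStronglyMeasurable u' (volume.restrict (Set.Ioi (0:ℝ))) := by
    refine (measurable_deriv u).aestronglyMeasurable.congr ?_
    rw [Filter.EventuallyEq, ae_restrict_iff' measurableSet_Ioi]
    exact Eventually.of_forall fun z hz => (hu z hz).deriv
  have hu_cont : ContinuousOn u (Set.Ioi (0:ℝ)) := fun z hz =>
    ((hu z hz).continuousAt).continuousWithinAt
  have hb_meas : AEStronglyMeasurable b (volume.restrict (Set.Ioi (0:ℝ))) :=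
    hb_cont.aestronglyMeasurable measurableSet_Ioi
  -- b u'^2 integrable on Ioi 0
  have h_bu2 : IntegrableOn (fun z => b z * (u' z) ^ 2) (Set.Ioi (0:ℝ)) := by
    refine Integrable.mono' hu_energy (hb_meas.mul (hu'_meas.pow 2)) ?_
    rw [ae_restrict_iff' measurableSet_Ioi]
    refine Eventually.of_forall fun z hz => ?_
    have h1 := (hb_pos z hz).le
    have h2 := sq_nonneg (u' z)
    have h3 := sq_nonneg (u z)
    have h4 := (ha_pos z hz).le
    rw [Real.norm_eq_abs, abs_of_nonneg (mul_nonneg h1 h2)]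
    nlinarith [mul_nonneg h4 h3]
  -- a u^2 integrable on Ioi 0
  have h_au2 : IntegrableOn (fun z => a z * (u z) ^ 2) (Set.Ioi (0:ℝ)) := by
    have := hu_energy.sub h_bu2
    exact this.congr (Eventually.of_forall fun z => by
      simp only [Pi.sub_apply]; ring)
  -- u' integrable on Ioi z'
  have hIoi_sub : Set.Ioi z' ⊆ Set.Ioi (0:ℝ) := Ioi_subset_Ioi hz'.le
  have hu'_int : IntegrableOn u' (Set.Ioi z') := by
    refine Integrable.mono'
      (((hb_int.add (h_bu2.mono_set hIoi_sub)).div_const 2))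
      (hu'_meas.mono_set hIoi_sub) ?_
    rw [ae_restrict_iff' measurableSet_Ioi]
    refine Eventually.of_forall fun z hz => ?_
    have hbz : 0 < b z := hb_pos z (hIoi_sub hz)
    simp only [Pi.add_apply, Real.norm_eq_abs]
    rw [le_div_iff₀ (by norm_num : (0:ℝ) < 2)]
    have key : b z * (|u' z| * 2) ≤ b z * (1 / b z + b z * u' z ^ 2) := by
      have h1 : b z * (1 / b z) = 1 := by field_simp
      have h2 : b z * (1 / b z + b z * u' z ^ 2) = 1 + (b z * |u' z|) ^ 2 := by
        rw [mul_add, h1, ← sq_abs (u' z)]; ring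
      rw [h2]
      nlinarith [sq_nonneg (1 - b z * |u' z|)]
    exact le_of_mul_le_mul_left key hbz
  -- FTC on [c, x] for z' ≤ c ≤ x
  have hftc : ∀ c x : ℝ, z' ≤ c → c ≤ x → u x - u c = ∫ s in c..x, u' s := by
    intro c x hc hcx
    have hsub : Set.uIcc c x ⊆ Set.Ioi (0:ℝ) := by
      rw [Set.uIcc_of_le hcx]
      intro y hy
      exact lt_of_lt_of_le (lt_of_lt_of_le hz' hc) hy.1
    refine (intervalIntegral.integral_eq_sub_of_hasDerivAt
      (fun y hy => hu y (hsub hy)) ?_).symm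
    rw [intervalIntegrable_iff_integrableOn_Ioc_of_le hcx]
    exact hu'_int.mono_set (fun y hy => lt_of_le_of_lt hc hy.1)
  -- u tends to L
  set L : ℝ := u z' + ∫ s in Set.Ioi z', u' s with hL_def
  have h_tendL : Tendsto u atTop (nhds L) := by
    have h1 : Tendsto (fun x => ∫ s in z'..x, u' s) atTop
        (nhds (∫ s in Set.Ioi z', u' s)) :=
      intervalIntegral_tendsto_integral_Ioi z' hu'_int tendsto_id
    have h2 : Tendsto (fun x => u z' + ∫ s in z'..x, u' s) atTop (nhds L) :=
      tendsto_const_nhds.add h1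
    refine h2.congr' ?_
    filter_upwards [eventually_ge_atTop z'] with x hx
    rw [← hftc z' x le_rfl hx]; ring
  clear_value L
  -- L = 0
  have hL0 : L = 0 := by
    by_contra hL
    have hL2 : 0 < |L| / 2 := by positivity
    have hev : ∀ᶠ x in atTop, |L| / 2 ≤ |u x| := by
      filter_upwards [h_tendL (Metric.ball_mem_nhds L hL2)] with x hx
      have : |u x - L| < |L| / 2 := by
        simpa [Real.dist_eq] using hx
      have := abs_sub_abs_le_abs_sub L (u x)
      rw [abs_sub_comm] at this
      linarith
    obtain ⟨T, hT⟩ := (hev.and (eventually_ge_atTop (z' + 1))).exists_forall_of_atTop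
    have hTpos : 0 < T := by
      have := (hT T le_rfl).2; linarith
    refine ha_div T hTpos ?_
    have hsubT : Set.Ioi T ⊆ Set.Ioi (0:ℝ) := Ioi_subset_Ioi hTpos.le
    -- measurability of a on Ioi T
    have h_au2T : AEStronglyMeasurable (fun z => a z * (u z) ^ 2)
        (volume.restrict (Set.Ioi T)) :=
      (h_au2.aestronglyMeasurable).mono_set hsubT
    have hu_measT : AEStronglyMeasurable u (volume.restrict (Set.Ioi T)) :=
      (hu_cont.mono hsubT).aestronglyMeasurable measurableSet_Ioi
    have ha_meas : AEStronglyMeasurable a (volume.restrict (Set.Ioi T)) := by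
      refine ((h_au2T.aemeasurable.div
        (hu_measT.aemeasurable.pow_const 2)).aestronglyMeasurable.congr ?_)
      rw [Filter.EventuallyEq, ae_restrict_iff' measurableSet_Ioi]
      refine Eventually.of_forall fun z hz => ?_
      have hz2 : |L| / 2 ≤ |u z| := (hT z hz.le).1
      have hune : u z ≠ 0 := by
        intro h; rw [h] at hz2; simp at hz2; linarith
      show a z * u z ^ 2 / u z ^ 2 = a z
      rw [mul_div_assoc, div_self (pow_ne_zero 2 hune), mul_one]
    refine Integrable.mono' (((h_au2.mono_set hsubT)).const_mul (4 / L ^ 2))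
      ha_meas ?_
    rw [ae_restrict_iff' measurableSet_Ioi]
    refine Eventually.of_forall fun z hz => ?_
    have hz2 : |L| / 2 ≤ |u z| := (hT z hz.le).1
    have hzpos := ha_pos z (hsubT hz)
    have hL2' : 0 < L ^ 2 := by positivity
    rw [Real.norm_eq_abs, abs_of_nonneg hzpos.le]
    have h5 : L ^ 2 / 4 ≤ (u z) ^ 2 := by
      nlinarith [mul_self_le_mul_self (by positivity : (0:ℝ) ≤ |L| / 2) hz2,
        sq_abs L, sq_abs (u z)]
    rw [div_mul_eq_mul_div, le_div_iff₀ hL2']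
    have h6 : a z * (L ^ 2 / 4) ≤ a z * (u z) ^ 2 :=
      mul_le_mul_of_nonneg_left h5 hzpos.le
    nlinarith [h6]
  rw [hL0] at h_tendL
  refine ⟨h_tendL, ?_⟩
  -- pointwise bound
  intro z hz
  have hz0 : (0:ℝ) < z := lt_of_lt_of_le hz' hz
  have hsubz : Set.Ioi z ⊆ Set.Ioi z' := Ioi_subset_Ioi hz
  have hu'_intz : IntegrableOn u' (Set.Ioi z) := hu'_int.mono_set hsubz
  have hbintz : IntegrableOn (fun s => 1 / b s) (Set.Ioi z) := hb_int.mono_set hsubz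
  have hbu2z : IntegrableOn (fun s => b s * (u' s) ^ 2) (Set.Ioi z) :=
    h_bu2.mono_set (Ioi_subset_Ioi hz0.le)
  -- u z = - ∫_{Ioi z} u'
  have hrep : u z = - ∫ s in Set.Ioi z, u' s := by
    have h1 : Tendsto (fun x => ∫ s in z..x, u' s) atTop
        (nhds (∫ s in Set.Ioi z, u' s)) :=
      intervalIntegral_tendsto_integral_Ioi z hu'_intz tendsto_id
    have h2 : Tendsto (fun x => u x - u z) atTop (nhds (0 - u z)) :=
      h_tendL.sub tendsto_const_nhds
    have h3 : Tendsto (fun x => ∫ s in z..x, u' s) atTop (nhds (0 - u z)) := by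
      refine h2.congr' ?_
      filter_upwards [eventually_ge_atTop z] with x hx
      exact hftc z x hz hx
    have := tendsto_nhds_unique h1 h3
    linarith
  set A : ℝ := ∫ s in Set.Ioi z, 1 / b s with hA_def
  set B : ℝ := ∫ s in Set.Ioi z, b s * (u' s) ^ 2 with hB_def
  clear_value A B
  have hA_nonneg : 0 ≤ A := by
    rw [hA_def]
    refine setIntegral_nonneg measurableSet_Ioi fun s hs => ?_
    have := hb_pos s (lt_trans hz0 hs)
    positivity
  have hB_nonneg : 0 ≤ B := by
    rw [hB_def]
    refine setIntegral_nonneg measurableSet_Ioi fun s hs => ?_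
    have := hb_pos s (lt_trans hz0 hs)
    positivity
  have hA_pos : 0 < A := by
    rw [hA_def]
    rw [setIntegral_pos_iff_support_of_nonneg_ae ?_ hbintz]
    · refine lt_of_lt_of_le (MeasureTheory.Measure.measure_Ioi_pos volume z) (measure_mono ?_)
      intro s hs
      have hbs := hb_pos s (lt_trans hz0 hs)
      exact ⟨by simp only [Function.mem_support]; positivity, hs⟩
    · rw [Filter.EventuallyLE, ae_restrict_iff' measurableSet_Ioi]
      refine Eventually.of_forall fun s hs => ?_
      have := hb_pos s (lt_trans hz0 hs)
      positivity
  -- |u z| ≤ ∫ |u'|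
  have hI : |u z| ≤ ∫ s in Set.Ioi z, |u' s| := by
    rw [hrep, abs_neg]
    exact (norm_integral_le_integral_norm u').trans_eq (by simp [Real.norm_eq_abs])
  -- t-trick
  have htrick : ∀ t : ℝ, 0 < t →
      (∫ s in Set.Ioi z, |u' s|) ≤ (t * A + B / t) / 2 := by
    intro t ht
    have hle : (∫ s in Set.Ioi z, |u' s|) ≤
        ∫ s in Set.Ioi z, (t / 2 * (1 / b s) + 1 / (2 * t) * (b s * (u' s) ^ 2)) := by
      refine setIntegral_mono_on hu'_intz.abs
        (((hbintz.const_mul _)).add ((hbu2z.const_mul _))) measurableSet_Ioi ?_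
      intro s hs
      have hbs : 0 < b s := hb_pos s (lt_trans hz0 hs)
      have key : b s * t * (|u' s| * 2) ≤ b s * t * (t / b s + b s * (u' s) ^ 2 / t) := by
        have h1 : b s * t * (t / b s) = t ^ 2 := by field_simp
        have h2 : b s * t * (b s * (u' s) ^ 2 / t) = (b s * |u' s|) ^ 2 := by
          have habs : (u' s) ^ 2 = |u' s| ^ 2 := (sq_abs (u' s)).symm
          field_simp
          rw [habs]
        rw [mul_add, h1, h2]
        nlinarith [sq_nonneg (t - b s * |u' s|), abs_nonneg (u' s)]
      have h3 : |u' s| ≤ (t / b s + b s * (u' s) ^ 2 / t) / 2 := by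
        rw [le_div_iff₀ (by norm_num : (0:ℝ) < 2)]
        exact le_of_mul_le_mul_left key (by positivity)
      refine h3.trans (le_of_eq ?_)
      field_simp
    rw [integral_add ((hbintz.const_mul _)) ((hbu2z.const_mul _)),
      integral_const_mul, integral_const_mul] at hle
    refine hle.trans (le_of_eq ?_)
    rw [← hA_def, ← hB_def]
    field_simp
  -- conclude
  have hfinal : (∫ s in Set.Ioi z, |u' s|) ≤ Real.sqrt A * Real.sqrt B := by
    refine le_of_forall_pos_le_add fun ε hε => ?_
    have hsA : 0 < Real.sqrt A := Real.sqrt_pos.mpr hA_pos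
    set δ : ℝ := ε / Real.sqrt A with hδ_def
    have hδ : 0 < δ := by rw [hδ_def]; positivity
    clear_value δ
    set t : ℝ := (Real.sqrt B + δ) / Real.sqrt A with ht_def
    have htpos : 0 < t := by rw [ht_def]; positivity
    clear_value t
    have h1 := htrick t htpos
    have hsB : Real.sqrt B ^ 2 = B := Real.sq_sqrt hB_nonneg
    have hsA2 : Real.sqrt A ^ 2 = A := Real.sq_sqrt hA_pos.le
    have h2 : t * A = Real.sqrt A * (Real.sqrt B + δ) := by
      rw [ht_def]; field_simp; linear_combination -hsA2
    have h3 : B / t ≤ Real.sqrt A * Real.sqrt B := by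
      rw [ht_def, div_div_eq_mul_div, div_le_iff₀ (by positivity)]
      have hBB : B * Real.sqrt A = Real.sqrt A * Real.sqrt B * Real.sqrt B := by
        linear_combination -Real.sqrt A * hsB
      rw [hBB]
      nlinarith [mul_nonneg (mul_nonneg hsA.le (Real.sqrt_nonneg B)) hδ.le]
    have h4 : Real.sqrt A * δ = ε := by
      rw [hδ_def]; field_simp
    calc (∫ s in Set.Ioi z, |u' s|) ≤ (t * A + B / t) / 2 := h1
      _ ≤ (Real.sqrt A * (Real.sqrt B + δ) + Real.sqrt A * Real.sqrt B) / 2 := by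
          rw [h2]; linarith
      _ = Real.sqrt A * Real.sqrt B + Real.sqrt A * δ / 2 := by ring
      _ ≤ Real.sqrt A * Real.sqrt B + ε := by
          have : 0 ≤ Real.sqrt A * δ := mul_nonneg hsA.le hδ.le
          linarith [h4]
  exact hI.trans hfinal
end
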